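/- For the one-sample t-test rejection regions Ω(θ) = (a(θ), b(θ)) with a, b as in equations (18)–(19), there exist θ₁ ≠ θ₂ in (θ₀, ∞) such that neither Ω(θ₁) ⊆ Ω(θ₂) nor Ω(θ₂) ⊆ Ω(θ₁); i.e., the rejection regions are not nested and no single region covers all others. -/

import Mathlib

open Set

set_option maxHeartbeats 1000000 in
theorem stmt_17 (n : ℕ) (hn : 1 ≤ n) (U θ₀ γₙ : ℝ) (hU : 0 < U) (hγₙ : 1 < γₙ)
    (a b : ℝ → ℝ)
    (ha : ∀ θ, a θ = (γₙ * θ - θ₀) / (γₙ - 1) -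
      Real.sqrt (γₙ * (θ - θ₀) ^ 2 / (γₙ - 1) ^ 2 - U / n))
    (hb : ∀ θ, b θ = (γₙ * θ - θ₀) / (γₙ - 1) +
      Real.sqrt (γₙ * (θ - θ₀) ^ 2 / (γₙ - 1) ^ 2 - U / n))
    (D : Set ℝ)
    (hD : D = {θ : ℝ | θ₀ < θ ∧ U / n ≤ γₙ * (θ - θ₀) ^ 2 / (γₙ - 1) ^ 2})
    (Ω : ℝ → Set ℝ) (hΩ : ∀ θ, Ω θ = Ioo (a θ) (b θ)) :
    ∃ θ₁ ∈ D, ∃ θ₂ ∈ D, θ₁ ≠ θ₂ ∧ ¬ Ω θ₁ ⊆ Ω θ₂ ∧ ¬ Ω θ₂ ⊆ Ω θ₁ := by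
  have hγ0 : (0:ℝ) < γₙ := by linarith
  have hγ1 : (0:ℝ) < γₙ - 1 := by linarith
  have hn0 : (0:ℝ) < n := by exact_mod_cast hn
  have hUn : 0 < U / n := div_pos hU hn0
  obtain ⟨g, hg2, hg1⟩ : ∃ g : ℝ, g ^ 2 = γₙ ∧ 1 < g := by
    refine ⟨Real.sqrt γₙ, Real.sq_sqrt hγ0.le, ?_⟩
    nlinarith [Real.sqrt_nonneg γₙ, Real.sq_sqrt hγ0.le]
  have hg0 : (0:ℝ) < g := by linarith
  have hgm : (0:ℝ) < g - 1 := by linarith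
  obtain ⟨s, hs2, hs⟩ : ∃ s : ℝ, s ^ 2 = U / n ∧ 0 < s :=
    ⟨Real.sqrt (U / n), Real.sq_sqrt hUn.le, Real.sqrt_pos.mpr hUn⟩
  obtain ⟨x₁, hx1, hdx1⟩ : ∃ x : ℝ, 0 < x ∧ γₙ * x ^ 2 / (γₙ - 1) ^ 2 = 4 * (U / n) := by
    refine ⟨2 * (γₙ - 1) / g * s, by positivity, ?_⟩
    have hsn : s ^ 2 * n = U := by rw [hs2]; field_simp
    field_simp
    linear_combination 4 * γₙ * hsn - 4 * U * hg2
  obtain ⟨x₂, hx12, hx2eq⟩ : ∃ x : ℝ, x₁ < x ∧ (g - 1) * x = 2 * g * x₁ := by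
    refine ⟨x₁ * (2 * g / (g - 1)), ?_, by field_simp⟩
    have h1 : (1:ℝ) < 2 * g / (g - 1) := by
      rw [lt_div_iff₀ hgm]; linarith
    nlinarith
  have hx2 : 0 < x₂ := lt_trans hx1 hx12
  -- discriminant values (rewritten for θ = θ₀ + x)
  have hd1 : γₙ * ((θ₀ + x₁) - θ₀) ^ 2 / (γₙ - 1) ^ 2 = 4 * (U / n) := by
    have h : (θ₀ + x₁) - θ₀ = x₁ := by ring
    rw [h, hdx1]
  have hd2 : 4 * (U / n) ≤ γₙ * ((θ₀ + x₂) - θ₀) ^ 2 / (γₙ - 1) ^ 2 := by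
    rw [← hd1]
    apply div_le_div_of_nonneg_right _ (by positivity)
    have e1 : θ₀ + x₁ - θ₀ = x₁ := by ring
    have e2 : θ₀ + x₂ - θ₀ = x₂ := by ring
    rw [e1, e2]
    exact mul_le_mul_of_nonneg_left (pow_le_pow_left₀ hx1.le hx12.le 2) hγ0.le
  -- sqrt bounds: sqrt(d θ) ≤ g * x / (γₙ - 1) for θ = θ₀ + x, x > 0
  have hrub : ∀ x : ℝ, 0 < x →
      Real.sqrt (γₙ * ((θ₀ + x) - θ₀) ^ 2 / (γₙ - 1) ^ 2 - U / n) ≤ g * x / (γₙ - 1) := by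
    intro x hx
    have h1 : γₙ * ((θ₀ + x) - θ₀) ^ 2 / (γₙ - 1) ^ 2 - U / n ≤ (g * x / (γₙ - 1)) ^ 2 := by
      have h2 : (g * x / (γₙ - 1)) ^ 2 = γₙ * x ^ 2 / (γₙ - 1) ^ 2 := by
        rw [div_pow, mul_pow, hg2]
      have h3 : (θ₀ + x) - θ₀ = x := by ring
      rw [h2, h3]; linarith
    calc Real.sqrt (γₙ * ((θ₀ + x) - θ₀) ^ 2 / (γₙ - 1) ^ 2 - U / n)
        ≤ Real.sqrt ((g * x / (γₙ - 1)) ^ 2) := Real.sqrt_le_sqrt h1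
      _ = g * x / (γₙ - 1) := Real.sqrt_sq (by positivity)
  -- positivity of sqrt at both points
  have hr1pos : 0 < Real.sqrt (γₙ * ((θ₀ + x₁) - θ₀) ^ 2 / (γₙ - 1) ^ 2 - U / n) := by
    apply Real.sqrt_pos.mpr; rw [hd1]; linarith
  have hr2pos : 0 < Real.sqrt (γₙ * ((θ₀ + x₂) - θ₀) ^ 2 / (γₙ - 1) ^ 2 - U / n) := by
    apply Real.sqrt_pos.mpr; linarith
  -- key: b θ₁ ≤ a θ₂
  have hkey : b (θ₀ + x₁) ≤ a (θ₀ + x₂) := by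
    rw [hb, ha]
    have h1 := hrub x₁ hx1
    have h2 := hrub x₂ hx2
    have hgx : g * (x₁ + x₂) ≤ γₙ * (x₂ - x₁) := by
      have key : γₙ * (x₂ - x₁) - g * (x₁ + x₂) = g * x₁ * (g - 1) := by
        linear_combination (-(x₂ - x₁)) * hg2 + g * hx2eq
      nlinarith [mul_pos (mul_pos hg0 hx1) hgm]
    have h3 : g * x₁ / (γₙ - 1) + g * x₂ / (γₙ - 1) ≤ γₙ * (x₂ - x₁) / (γₙ - 1) := by
      rw [← add_div, div_le_div_iff₀ hγ1 hγ1]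
      nlinarith [hgx]
    have hcent : (γₙ * (θ₀ + x₂) - θ₀) / (γₙ - 1) - (γₙ * (θ₀ + x₁) - θ₀) / (γₙ - 1)
        = γₙ * (x₂ - x₁) / (γₙ - 1) := by
      rw [div_sub_div_same]; congr 1; ring
    linarith
  -- the two centers, witnesses of nonemptiness
  have hmem1 : (γₙ * (θ₀ + x₁) - θ₀) / (γₙ - 1) ∈ Ω (θ₀ + x₁) := by
    rw [hΩ, mem_Ioo, ha, hb]; constructor <;> linarith
  have hmem2 : (γₙ * (θ₀ + x₂) - θ₀) / (γₙ - 1) ∈ Ω (θ₀ + x₂) := by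
    rw [hΩ, mem_Ioo, ha, hb]; constructor <;> linarith
  refine ⟨θ₀ + x₁, ?_, θ₀ + x₂, ?_, ?_, ?_, ?_⟩
  · rw [hD]; exact ⟨by linarith, by rw [hd1]; linarith⟩
  · rw [hD]; exact ⟨by linarith, by linarith⟩
  · intro h
    have : x₁ = x₂ := by linarith [add_left_cancel h]
    linarith
  · intro hsub
    have h := hsub hmem1
    rw [hΩ, mem_Ioo, ha] at h
    have hle : (γₙ * (θ₀ + x₁) - θ₀) / (γₙ - 1) < b (θ₀ + x₁) := by
      rw [hb]; linarith
    rw [ha] at hkey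
    linarith [h.1]
  · intro hsub
    have h := hsub hmem2
    rw [hΩ, mem_Ioo, hb] at h
    have hle : a (θ₀ + x₂) < (γₙ * (θ₀ + x₂) - θ₀) / (γₙ - 1) := by
      rw [ha]; linarith
    rw [hb] at hkey
    linarith [h.2]
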